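/- Let p be a prime, R a commutative ring of characteristic p, k ∈ ℕ, and B = MvPolynomial (Fin k) R. Given g : Fin k → B, let D be the R-derivation of B defined by D(f) = Σ_i g i * ∂_i f, and let D' be the R-linear endomorphism of B defined by D'(f) = Σ_i (g i)^p * D_{p·e_i}(f), where e_i is the indicator function of i and ∂_i the partial derivative in X_i. Then D'(f^p) = (D f)^p for all f ∈ B. (Thus D' is a lift of D satisfying the Frobenius compatibility D^{(1)}(a^p) = D(a)^p.) -/

import Mathlib

/-- The divided-power operator `D_n` on `MvPolynomial σ R`, determined on monomials by
`D_n (X ^ m) = (∏ i, Nat.choose (m i) (n i)) • X ^ (m - n)` (componentwise truncated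
subtraction). -/
noncomputable def dpOp (R : Type*) [CommRing R] (σ : Type*) [Fintype σ] (n : σ →₀ ℕ) :
    MvPolynomial σ R →ₗ[R] MvPolynomial σ R :=
  (Finsupp.lsum ℕ fun m : σ →₀ ℕ =>
    (∏ i, Nat.choose (m i) (n i)) • (MvPolynomial.monomial (m - n) : R →ₗ[R] MvPolynomial σ R))
    ∘ₗ (AddMonoidAlgebra.coeffLinearEquiv R).toLinearMap

open MvPolynomial

lemma dpOp_monomial (R : Type*) [CommRing R] (σ : Type*) [Fintype σ] (n m : σ →₀ ℕ) (c : R) :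
    dpOp R σ n (monomial m c) = (∏ i, Nat.choose (m i) (n i)) • monomial (m - n) c := by
  rw [dpOp, LinearMap.comp_apply]
  have : (AddMonoidAlgebra.coeffLinearEquiv R).toLinearMap (monomial m c : MvPolynomial σ R) = Finsupp.single m c := by
    simp [MvPolynomial.monomial, AddMonoidAlgebra.coeffLinearEquiv]
  rw [this, Finsupp.lsum_single]
  simp

lemma cast_choose_mul {p : ℕ} (hp : p.Prime) (R : Type*) [CommRing R] [CharP R p] (a : ℕ) :
    (((p * a).choose p : ℕ) : R) = a := by
  haveI := Fact.mk hp
  apply CharP.natCast_eq_natCast' R p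
  have h := Choose.choose_modEq_choose_mod_mul_choose_div_nat (p := p) (n := p * a) (k := p)
  simpa [Nat.mul_mod_right, Nat.mod_self, Nat.mul_div_cancel_left _ hp.pos,
    Nat.div_self hp.pos] using h

lemma dpOp_monomial_pow {p : ℕ} (hp : p.Prime) (R : Type*) [CommRing R] [CharP R p]
    (k : ℕ) (i : Fin k) (m : Fin k →₀ ℕ) (c : R) :
    dpOp R (Fin k) (p • Finsupp.single i 1) (monomial m c ^ p)
      = (MvPolynomial.pderiv i (monomial m c)) ^ p := by
  rw [monomial_pow, dpOp_monomial, pderiv_monomial, monomial_pow]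
  have hprod : (∏ j, Nat.choose ((p • m) j) ((p • Finsupp.single i 1) j))
      = (p * m i).choose p := by
    rw [Finset.prod_eq_single i]
    · simp
    · intro j _ hj
      simp [Finsupp.single_apply, hj.symm, Nat.choose_zero_right]
    · simp
  have hexp : p • m - p • Finsupp.single i 1 = p • (m - Finsupp.single i 1) := by
    ext j
    simp only [Finsupp.coe_tsub, Pi.sub_apply, Finsupp.smul_apply, smul_eq_mul,
      Nat.mul_sub]
  rw [hprod, hexp, smul_monomial]
  congr 1
  haveI : ExpChar R p := .prime hp
  have hF : ((m i : R)) ^ p = (m i : R) := by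
    have := map_natCast (frobenius R p) (m i)
    rwa [frobenius_def] at this
  rw [mul_pow, hF]
  rw [nsmul_eq_mul, cast_choose_mul hp]
  ring

lemma dpOp_pow_key {p : ℕ} (hp : p.Prime) (R : Type*) [CommRing R] [CharP R p]
    (k : ℕ) (i : Fin k) (f : MvPolynomial (Fin k) R) :
    dpOp R (Fin k) (p • Finsupp.single i 1) (f ^ p) = (MvPolynomial.pderiv i f) ^ p := by
  haveI : ExpChar (MvPolynomial (Fin k) R) p := ExpChar.prime hp
  have hfr : ∀ (s : Finset (Fin k →₀ ℕ)) (F : (Fin k →₀ ℕ) → MvPolynomial (Fin k) R),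
      (∑ x ∈ s, F x) ^ p = ∑ x ∈ s, F x ^ p := fun s F => by
    have h := map_sum (frobenius (MvPolynomial (Fin k) R) p) F s
    simp only [frobenius_def] at h
    exact h
  conv_lhs => rw [f.as_sum, hfr, map_sum]
  conv_rhs => rw [f.as_sum, map_sum, hfr]
  exact Finset.sum_congr rfl fun m _ => dpOp_monomial_pow hp R k i m _

/-- For the derivation `D f = ∑ i, g i * ∂_i f` of `MvPolynomial (Fin k) R`, the operator
`D' f = ∑ i, (g i)^p * D_(p·e_i) f` is a Frobenius-compatible lift: `D' (f^p) = (D f)^p`. -/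
theorem dpOp_lift_frobenius_compat (p : ℕ) (hp : p.Prime) (R : Type*) [CommRing R] [CharP R p]
    (k : ℕ) (g : Fin k → MvPolynomial (Fin k) R) (f : MvPolynomial (Fin k) R) :
    (∑ i, g i ^ p * dpOp R (Fin k) (p • Finsupp.single i 1) (f ^ p))
      = (∑ i, g i * MvPolynomial.pderiv i f) ^ p := by
  haveI : ExpChar (MvPolynomial (Fin k) R) p := ExpChar.prime hp
  have hfr : ∀ (F : Fin k → MvPolynomial (Fin k) R),
      (∑ x, F x) ^ p = ∑ x, F x ^ p := fun F => by
    have h := map_sum (frobenius (MvPolynomial (Fin k) R) p) F Finset.univ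
    simp only [frobenius_def] at h
    exact h
  rw [hfr]
  refine Finset.sum_congr rfl fun i _ => ?_
  rw [mul_pow, dpOp_pow_key hp]
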